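/- Let n ≥ 3, μ > 2, and for β > 0 let x₀(β) = -Dβ e_n with D > 1 fixed, and b_β(x) = C_n β^{(n-2)/2}/(|x-x₀(β)|² - β²)^{(n-2)/2} with C_n = (n(n-2))^{(n-2)/4}. Fix 0 < r < R such that for all small β the half-annulus A_β(r,R) = {x ∈ ℝⁿ₊ : r < |x - x₀(β)| < R} is contained in {b_β ≤ 1}. Then lim_{β→0} ∫_{A_β(r,R)} |∇b_β|² / b_β^μ dx = +∞. -/

import Mathlib

noncomputable section

open Real Filter Topology MeasureTheory

abbrev E (n : ℕ) := EuclideanSpace ℝ (Fin n)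

def pd {n : ℕ} (f : E n → ℝ) (i : Fin n) (x : E n) : ℝ :=
  fderiv ℝ f x (EuclideanSpace.single i 1)


lemma sum_sq_eq {n : ℕ} (w : E n) : ∑ i, (w i) ^ 2 = ‖w‖ ^ 2 := by
  have h := EuclideanSpace.norm_eq w
  rw [h, Real.sq_sqrt (by positivity)]
  simp [sq_abs]

lemma F_eq (c t s ν μ : ℝ) (hc : 0 < c) (ht : 0 < t) :
    (c * (-ν * t ^ (-ν - 1)) * 2) ^ 2 * s ^ 2 / (c / t ^ ν) ^ μ
      = 4 * ν ^ 2 * c ^ (2 - μ) * s ^ 2 * t ^ (ν * μ - 2 * ν - 2) := by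
  have htν : (0:ℝ) < t ^ ν := Real.rpow_pos_of_pos ht ν
  have hcμ : (0:ℝ) < c ^ μ := Real.rpow_pos_of_pos hc μ
  have htνμ : (0:ℝ) < t ^ (ν * μ) := Real.rpow_pos_of_pos ht _
  have h1 : (c / t ^ ν) ^ μ = c ^ μ * (t ^ (ν * μ))⁻¹ := by
    rw [Real.div_rpow hc.le htν.le, ← Real.rpow_mul ht.le, div_eq_mul_inv]
  have hX : (c * (-ν * t ^ (-ν - 1)) * 2) ^ 2
      = 4 * ν ^ 2 * c ^ 2 * t ^ (-2 * ν - 2) := by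
    have h2 : (t ^ (-ν - 1)) ^ (2:ℕ) = t ^ (-2 * ν - 2) := by
      rw [← Real.rpow_natCast (t ^ (-ν - 1)) 2, ← Real.rpow_mul ht.le]
      congr 1; push_cast; ring
    calc (c * (-ν * t ^ (-ν - 1)) * 2) ^ 2
        = 4 * ν ^ 2 * c ^ 2 * (t ^ (-ν - 1)) ^ (2:ℕ) := by ring
      _ = 4 * ν ^ 2 * c ^ 2 * t ^ (-2 * ν - 2) := by rw [h2]
  have hc2 : c ^ (2 - μ) = c ^ (2:ℕ) / c ^ μ := by
    rw [Real.rpow_sub hc, ← Real.rpow_natCast c 2]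
    norm_num
  have htsplit : t ^ (ν * μ - 2 * ν - 2) = t ^ (ν * μ) * t ^ (-2 * ν - 2) := by
    rw [← Real.rpow_add ht]; congr 1; ring
  rw [h1, hX, hc2, htsplit]
  field_simp

lemma rpow_min_le (a b t e : ℝ) (ha : 0 < a) (hat : a ≤ t) (htb : t ≤ b) :
    min (a ^ e) (b ^ e) ≤ t ^ e := by
  rcases le_or_gt 0 e with he | he
  · exact le_trans (min_le_left _ _) (Real.rpow_le_rpow ha.le hat he)
  · exact le_trans (min_le_right _ _)
      (Real.rpow_le_rpow_of_nonpos (lt_of_lt_of_le ha hat) htb he.le)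

lemma aux_deriv {n : ℕ} (c ν β : ℝ) (p x : E n)
    (ht : 0 < ‖x - p‖ ^ 2 - β ^ 2) :
    HasFDerivAt (fun y : E n => c / (‖y - p‖ ^ 2 - β ^ 2) ^ ν)
      ((c * (-ν * (‖x - p‖ ^ 2 - β ^ 2) ^ (-ν - 1))) •
        (2 • (innerSL ℝ (x - p)))) x := by
  set t₀ : ℝ := ‖x - p‖ ^ 2 - β ^ 2 with htdef
  have hφ : HasFDerivAt (fun y : E n => ‖y - p‖ ^ 2 - β ^ 2)
      (2 • (innerSL ℝ (x - p))) x := by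
    have h1 : HasFDerivAt (fun y : E n => y - p) (ContinuousLinearMap.id ℝ (E n)) x :=
      (hasFDerivAt_id x).sub_const p
    have h2 := h1.norm_sq
    simpa using h2.sub_const (β ^ 2)
  have hψ : HasDerivAt (fun t : ℝ => c / t ^ ν)
      (c * (-ν * t₀ ^ (-ν - 1))) t₀ := by
    have h1 : HasDerivAt (fun t : ℝ => t ^ (-ν)) (-ν * t₀ ^ (-ν - 1)) t₀ :=
      Real.hasDerivAt_rpow_const (Or.inl (ne_of_gt ht))
    have h2 := h1.const_mul c
    refine h2.congr_of_eventuallyEq ?_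
    filter_upwards [eventually_gt_nhds ht] with t htpos
    rw [Real.rpow_neg htpos.le, div_eq_mul_inv]
  have := hψ.comp_hasFDerivAt x hφ; exact this

lemma sum_pd_sq {n : ℕ} (c ν β : ℝ) (p x : E n)
    (ht : 0 < ‖x - p‖ ^ 2 - β ^ 2) :
    ∑ i, (pd (fun y : E n => c / (‖y - p‖ ^ 2 - β ^ 2) ^ ν) i x) ^ 2
      = (c * (-ν * (‖x - p‖ ^ 2 - β ^ 2) ^ (-ν - 1)) * 2) ^ 2 * ‖x - p‖ ^ 2 := by
  have hf := (aux_deriv c ν β p x ht).fderiv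
  have hpd : ∀ i, pd (fun y : E n => c / (‖y - p‖ ^ 2 - β ^ 2) ^ ν) i x
      = (c * (-ν * (‖x - p‖ ^ 2 - β ^ 2) ^ (-ν - 1)) * 2) * (x - p) i := by
    intro i
    rw [pd, hf]
    simp [EuclideanSpace.inner_single_right, two_smul]
    ring
  simp only [hpd, mul_pow]
  rw [← Finset.mul_sum, sum_sq_eq]

lemma coord_le_norm' {n : ℕ} (y : E n) (i : Fin n) : |y i| ≤ ‖y‖ := by
  have h1 : (y i) ^ 2 ≤ ∑ k, (y k) ^ 2 :=
    Finset.single_le_sum (fun k _ => sq_nonneg (y k)) (Finset.mem_univ i)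
  have h2 := sum_sq_eq y
  nlinarith [abs_nonneg (y i), norm_nonneg y, sq_abs (y i)]

lemma t_lower' (r β s : ℝ) (hr : 0 < r) (hβ0 : 0 < β) (hβr : β < r / 2) (hs : r ≤ s) :
    3 / 4 * r ^ 2 < s ^ 2 - β ^ 2 := by nlinarith

lemma pos34' {r : ℝ} (hr : 0 < r) : 0 < 3 / 4 * r ^ 2 := by nlinarith

lemma t_upper' (β s R' : ℝ) (hs : 0 ≤ s) (hsR : s ≤ R') : s ^ 2 - β ^ 2 ≤ R' ^ 2 := by
  nlinarith

set_option maxHeartbeats 1000000 in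
/-- along the bubbles `b_β` (with `μ > 2` and fixed `0 < r < R` such that
the half-annuli `A_β(r,R)` are contained in `{b_β ≤ 1}` for small `β`), the capacity-type
quantity `∫_{A_β(r,R)} |∇b_β|²/b_β^μ` tends to `+∞` as `β → 0⁺`. -/
theorem stmt15 (n : ℕ) (hn : 3 ≤ n) (μ : ℝ) (hμ : 2 < μ)
    (D : ℝ) (hD : 1 < D) (r R : ℝ) (hr : 0 < r) (hrR : r < R)
    (x₀ : ℝ → E n)
    (hx₀ : ∀ β : ℝ, x₀ β = EuclideanSpace.single (⟨n - 1, by omega⟩ : Fin n) (-(D * β)))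
    (b : ℝ → E n → ℝ)
    (hb : b = fun β x =>
      ((n : ℝ) * ((n : ℝ) - 2)) ^ (((n : ℝ) - 2) / 4) * β ^ (((n : ℝ) - 2) / 2) /
        (‖x - x₀ β‖ ^ 2 - β ^ 2) ^ (((n : ℝ) - 2) / 2))
    (A : ℝ → Set (E n))
    (hA : ∀ β : ℝ, A β = {x : E n | 0 < x ⟨n - 1, by omega⟩ ∧
        r < ‖x - x₀ β‖ ∧ ‖x - x₀ β‖ < R})
    (hsub : ∀ᶠ β in 𝓝[>] (0 : ℝ), ∀ x ∈ A β, b β x ≤ 1) :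
    Tendsto
      (fun β : ℝ => ∫ x in A β, (∑ i, (pd (b β) i x) ^ 2) / (b β x) ^ μ)
      (𝓝[>] (0 : ℝ)) atTop := by
  have hn3 : (3:ℝ) ≤ (n:ℝ) := by exact_mod_cast hn
  set j : Fin n := ⟨n - 1, by omega⟩ with hj
  set ν : ℝ := ((n:ℝ) - 2) / 2 with hνdef
  have hν : 0 < ν := by rw [hνdef]; linarith
  set Cn : ℝ := ((n : ℝ) * ((n : ℝ) - 2)) ^ (((n : ℝ) - 2) / 4) with hCndef
  have hCn : 0 < Cn := Real.rpow_pos_of_pos (by nlinarith) _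
  set m : ℝ := (r + R) / 2 with hmdef
  set ρ : ℝ := (R - r) / 4 with hρdef
  have hρ : 0 < ρ := by rw [hρdef]; linarith
  set p₀ : E n := EuclideanSpace.single j m with hp₀def
  set B : Set (E n) := Metric.ball p₀ ρ with hBdef
  set e : ℝ := ν * μ - 2 * ν - 2 with hedef
  set m₀ : ℝ := min ((3 / 4 * r ^ 2) ^ e) ((R ^ 2) ^ e) with hm₀def
  have hm₀ : 0 < m₀ := lt_min (Real.rpow_pos_of_pos (by nlinarith) _)
    (Real.rpow_pos_of_pos (by nlinarith) _)
  set L : ℝ := 4 * ν ^ 2 * r ^ 2 * m₀ with hLdef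
  have hL : 0 < L := by positivity
  set VB : ℝ := (volume B).toReal with hVBdef
  have hVB : 0 < VB := ENNReal.toReal_pos (Metric.measure_ball_pos volume p₀ hρ).ne'
    measure_ball_lt_top.ne
  set C₀ : ℝ := L * Cn ^ (2 - μ) * VB with hC₀def
  have hC₀ : 0 < C₀ := by
    have : (0:ℝ) < Cn ^ (2 - μ) := Real.rpow_pos_of_pos hCn _
    positivity
  set a : ℝ := ν * (2 - μ) with hadef
  have ha : a < 0 := mul_neg_of_pos_of_neg hν (by linarith)
  set ε : ℝ := min (r / 2) ((R - r) / (8 * D)) with hεdef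
  have hε : 0 < ε := lt_min (by linarith) (div_pos (by linarith) (by linarith))
  -- main lower bound
  have key : ∀ β ∈ Set.Ioo (0:ℝ) ε,
      C₀ * β ^ a ≤ ∫ x in A β, (∑ i, (pd (b β) i x) ^ 2) / (b β x) ^ μ := by
    intro β hβ
    obtain ⟨hβ0, hβε⟩ := hβ
    have hβr : β < r / 2 := lt_of_lt_of_le hβε (min_le_left _ _)
    have hβD : β < (R - r) / (8 * D) := lt_of_lt_of_le hβε (min_le_right _ _)
    set p : E n := x₀ β with hpdef
    set c : ℝ := Cn * β ^ ν with hcdef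
    have hc : 0 < c := mul_pos hCn (Real.rpow_pos_of_pos hβ0 _)
    have hbβ : b β = fun x : E n => c / (‖x - p‖ ^ 2 - β ^ 2) ^ ν := by
      rw [hb]
    -- positivity of t on the annulus
    have htpos : ∀ x : E n, r < ‖x - p‖ → 3 / 4 * r ^ 2 < ‖x - p‖ ^ 2 - β ^ 2 := by
      intro x hx
      exact t_lower' r β ‖x - p‖ hr hβ0 hβr hx.le
    -- subset B ⊆ A β
    have hnormp₀p : ‖p₀ - p‖ = m + D * β := by
      have hsg : p₀ - p = EuclideanSpace.single j (m + D * β) := by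
        rw [hp₀def, hpdef, hx₀ β]
        ext i
        by_cases h : i = j
        · simp [h, EuclideanSpace.single_apply]
        · simp [EuclideanSpace.single_apply, Ne.symm h, h]
      rw [hsg, EuclideanSpace.norm_single, Real.norm_eq_abs]
      rw [abs_of_pos]
      rw [hmdef]; nlinarith
    have hBA : B ⊆ A β := by
      intro x hx
      rw [Metric.mem_ball, dist_eq_norm] at hx
      have hxp₀ : ‖x - p₀‖ < ρ := hx
      have hcoord := coord_le_norm' (x - p₀) j
      have hxj : (x - p₀) j = x j - m := by
        simp [hp₀def, EuclideanSpace.single_apply]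
      have hDβ : D * β < (R - r) / 8 := by
        have h8D : (0:ℝ) < 8 * D := by linarith
        calc D * β < D * ((R - r) / (8 * D)) := by
              exact mul_lt_mul_of_pos_left hβD (by linarith)
          _ = (R - r) / 8 := by field_simp
      have hlow : m + D * β - ρ ≤ ‖x - p‖ := by
        have h1 : ‖p₀ - p‖ - ‖p₀ - x‖ ≤ ‖(p₀ - p) - (p₀ - x)‖ := norm_sub_norm_le _ _
        have h2 : (p₀ - p) - (p₀ - x) = x - p := by
          rw [sub_sub_sub_cancel_left]
        rw [h2] at h1
        have h3 : ‖p₀ - x‖ = ‖x - p₀‖ := norm_sub_rev _ _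
        rw [hnormp₀p, h3] at h1
        linarith
      have hup : ‖x - p‖ < ρ + m + D * β := by
        calc ‖x - p‖ = ‖(x - p₀) + (p₀ - p)‖ := by rw [sub_add_sub_cancel]
          _ ≤ ‖x - p₀‖ + ‖p₀ - p‖ := norm_add_le _ _
          _ < ρ + (m + D * β) := by rw [hnormp₀p]; linarith
          _ = ρ + m + D * β := by ring
      rw [hA β]
      refine ⟨?_, ?_, ?_⟩
      · -- 0 < x j
        have : |x j - m| ≤ ‖x - p₀‖ := by rw [← hxj]; exact hcoord
        have habs := abs_le.mp this
        have : m - ρ ≤ x j := by cases' habs with h1 h2; linarith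
        have hmρ : 0 < m - ρ := by rw [hmdef, hρdef]; linarith
        linarith
      · -- r < ‖x - p‖
        have : r < m + D * β - ρ := by
          have : r < m - ρ := by rw [hmdef, hρdef]; linarith
          nlinarith [hβ0, hD]
        linarith
      · -- ‖x - p‖ < R
        have : ρ + m + D * β < R := by
          rw [hρdef, hmdef]; linarith
        linarith
    -- the compact superset S and continuity of the explicit form F
    set S : Set (E n) := {x : E n | r ≤ ‖x - p‖ ∧ ‖x - p‖ ≤ R} with hSdef
    have hcsub : Continuous fun x : E n => x - p := continuous_id.sub continuous_const
    have hcont_t : Continuous fun x : E n => ‖x - p‖ ^ 2 - β ^ 2 :=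
      (hcsub.norm.pow 2).sub continuous_const
    have hcont_nrm : Continuous fun x : E n => ‖x - p‖ ^ 2 := hcsub.norm.pow 2
    have hSt : ∀ x ∈ S, 0 < ‖x - p‖ ^ 2 - β ^ 2 := by
      intro x hx
      exact lt_trans (pos34' hr) (t_lower' r β ‖x - p‖ hr hβ0 hβr hx.1)
    set F : E n → ℝ := fun x =>
      (c * (-ν * (‖x - p‖ ^ 2 - β ^ 2) ^ (-ν - 1)) * 2) ^ 2 * ‖x - p‖ ^ 2 /
        (c / (‖x - p‖ ^ 2 - β ^ 2) ^ ν) ^ μ with hFdef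
    have hScont : ContinuousOn F S := by
      apply ContinuousOn.div
      · exact ((continuousOn_const.mul (continuousOn_const.mul
          (hcont_t.continuousOn.rpow_const fun x hx => Or.inl (hSt x hx).ne'))).mul
          continuousOn_const).pow 2 |>.mul hcont_nrm.continuousOn
      · exact (continuousOn_const.div
          (hcont_t.continuousOn.rpow_const fun x hx => Or.inl (hSt x hx).ne')
          (fun x hx => (Real.rpow_pos_of_pos (hSt x hx) ν).ne')).rpow_const
          fun x hx => Or.inl (div_pos hc (Real.rpow_pos_of_pos (hSt x hx) ν)).ne'
      · exact fun x hx =>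
          (Real.rpow_pos_of_pos (div_pos hc (Real.rpow_pos_of_pos (hSt x hx) ν)) μ).ne'
    have hScomp : IsCompact S := by
      rw [Metric.isCompact_iff_isClosed_bounded]
      constructor
      · have hS : S = (fun x : E n => ‖x - p‖) ⁻¹' (Set.Icc r R) := rfl
        rw [hS]
        exact isClosed_Icc.preimage hcsub.norm
      · apply (Metric.isBounded_closedBall (x := p) (r := R)).subset
        intro x hx
        rw [Metric.mem_closedBall, dist_eq_norm]
        exact hx.2
    have hIntFS : IntegrableOn F S := hScont.integrableOn_compact hScomp
    have hAS : A β ⊆ S := by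
      rw [hA β]; intro x hx; exact ⟨hx.2.1.le, hx.2.2.le⟩
    have hAmeas : MeasurableSet (A β) := by
      rw [hA β]
      have hcj : Continuous fun x : E n => x j := by
        have := (EuclideanSpace.proj (𝕜 := ℝ) j).continuous
        simpa using this
      have hnn : Continuous fun x : E n => ‖x - p‖ := hcsub.norm
      have hsets : {x : E n | 0 < x j ∧ r < ‖x - p‖ ∧ ‖x - p‖ < R}
          = {x : E n | 0 < x j} ∩ ({x | r < ‖x - p‖} ∩ {x | ‖x - p‖ < R}) := rfl
      rw [hsets]
      exact ((isOpen_lt continuous_const hcj).inter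
        ((isOpen_lt continuous_const hnn).inter
          (isOpen_lt hnn continuous_const))).measurableSet
    have hEq : Set.EqOn (fun x => (∑ i, (pd (b β) i x) ^ 2) / (b β x) ^ μ) F (A β) := by
      intro x hx
      have hx' : r < ‖x - p‖ := by rw [hA β] at hx; exact hx.2.1
      have ht : 0 < ‖x - p‖ ^ 2 - β ^ 2 := lt_trans (pos34' hr) (htpos x hx')
      simp only [hbβ]
      rw [sum_pd_sq c ν β p x ht]
    have hIntF : IntegrableOn F (A β) := hIntFS.mono_set hAS
    have hIntf : IntegrableOn (fun x => (∑ i, (pd (b β) i x) ^ 2) / (b β x) ^ μ) (A β) :=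
      hIntF.congr_fun (fun x hx => (hEq hx).symm) hAmeas
    have hfnonneg : 0 ≤ᵐ[volume.restrict (A β)]
        fun x => (∑ i, (pd (b β) i x) ^ 2) / (b β x) ^ μ := by
      refine (ae_restrict_iff' hAmeas).mpr (ae_of_all _ ?_)
      intro x hx
      have hx' : r < ‖x - p‖ := by rw [hA β] at hx; exact hx.2.1
      have ht : 0 < ‖x - p‖ ^ 2 - β ^ 2 := lt_trans (pos34' hr) (htpos x hx')
      apply div_nonneg (Finset.sum_nonneg fun i _ => sq_nonneg _)
      apply Real.rpow_nonneg
      rw [hbβ]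
      exact (div_pos hc (Real.rpow_pos_of_pos ht ν)).le
    have hBmono : (∫ x in B, (∑ i, (pd (b β) i x) ^ 2) / (b β x) ^ μ)
        ≤ ∫ x in A β, (∑ i, (pd (b β) i x) ^ 2) / (b β x) ^ μ :=
      setIntegral_mono_set hIntf hfnonneg (HasSubset.Subset.eventuallyLE hBA)
    have hBcongr : (∫ x in B, (∑ i, (pd (b β) i x) ^ 2) / (b β x) ^ μ) = ∫ x in B, F x :=
      setIntegral_congr_fun measurableSet_ball (hEq.mono hBA)
    have hFlow : ∀ x ∈ B, L * c ^ (2 - μ) ≤ F x := by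
      intro x hx
      have hxA := hBA hx
      rw [hA β] at hxA
      obtain ⟨-, hx1, hx2⟩ := hxA
      have htge : 3 / 4 * r ^ 2 < ‖x - p‖ ^ 2 - β ^ 2 := htpos x hx1
      have ht : 0 < ‖x - p‖ ^ 2 - β ^ 2 := lt_trans (pos34' hr) htge
      have hF : F x = 4 * ν ^ 2 * c ^ (2 - μ) * ‖x - p‖ ^ 2 *
          (‖x - p‖ ^ 2 - β ^ 2) ^ e := by
        rw [hedef]
        exact F_eq c _ ‖x - p‖ ν μ hc ht
      rw [hF, hLdef]
      have htle : ‖x - p‖ ^ 2 - β ^ 2 ≤ R ^ 2 := t_upper' β _ R (norm_nonneg _) hx2.le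
      have hte : m₀ ≤ (‖x - p‖ ^ 2 - β ^ 2) ^ e := by
        rw [hm₀def]
        exact rpow_min_le _ _ _ _ (pos34' hr) htge.le htle
      have hs2 : r ^ 2 ≤ ‖x - p‖ ^ 2 := pow_le_pow_left₀ hr.le hx1.le 2
      have hcp : 0 < c ^ (2 - μ) := Real.rpow_pos_of_pos hc _
      calc 4 * ν ^ 2 * r ^ 2 * m₀ * c ^ (2 - μ)
          = (4 * ν ^ 2 * c ^ (2 - μ)) * (r ^ 2 * m₀) := by ring
        _ ≤ (4 * ν ^ 2 * c ^ (2 - μ)) * (‖x - p‖ ^ 2 * ((‖x - p‖ ^ 2 - β ^ 2) ^ e)) := by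
            apply mul_le_mul_of_nonneg_left _
              (mul_nonneg (mul_nonneg (by norm_num) (sq_nonneg ν)) hcp.le)
            exact mul_le_mul hs2 hte hm₀.le (pow_nonneg (norm_nonneg _) 2)
        _ = 4 * ν ^ 2 * c ^ (2 - μ) * ‖x - p‖ ^ 2 * (‖x - p‖ ^ 2 - β ^ 2) ^ e := by ring
    have hconst : (L * c ^ (2 - μ)) * VB ≤ ∫ x in B, F x := by
      rw [hVBdef, hBdef]
      exact setIntegral_ge_of_const_le_real measurableSet_ball measure_ball_lt_top.ne
        (by rw [← hBdef]; exact hFlow) (hIntFS.mono_set (hBA.trans hAS))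
    have hcsplit : c ^ (2 - μ) = Cn ^ (2 - μ) * β ^ a := by
      rw [hcdef, Real.mul_rpow hCn.le (Real.rpow_nonneg hβ0.le _),
        ← Real.rpow_mul hβ0.le, ← hadef]
    calc C₀ * β ^ a = (L * c ^ (2 - μ)) * VB := by rw [hC₀def, hcsplit]; ring
      _ ≤ ∫ x in B, F x := hconst
      _ = ∫ x in B, (∑ i, (pd (b β) i x) ^ 2) / (b β x) ^ μ := hBcongr.symm
      _ ≤ ∫ x in A β, (∑ i, (pd (b β) i x) ^ 2) / (b β x) ^ μ := hBmono
  -- conclude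
  have hlow : Tendsto (fun β : ℝ => C₀ * β ^ a) (𝓝[>] (0:ℝ)) atTop := by
    have h1 : Tendsto (fun β : ℝ => β ^ a) (𝓝[>] (0:ℝ)) atTop := by
      have h2 := (tendsto_rpow_atTop (y := -a) (by linarith)).comp tendsto_inv_nhdsGT_zero
      refine h2.congr' ?_
      filter_upwards [self_mem_nhdsWithin] with β hβ
      have hβ0 : (0:ℝ) < β := hβ
      show (β⁻¹) ^ (-a) = β ^ a
      rw [Real.inv_rpow hβ0.le, ← Real.rpow_neg hβ0.le, neg_neg]
    exact h1.const_mul_atTop hC₀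
  refine tendsto_atTop_mono' _ ?_ hlow
  filter_upwards [Ioo_mem_nhdsGT_of_mem (Set.mem_Ico.mpr ⟨le_refl (0:ℝ), hε⟩)] with β hβ
  exact key β hβ
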